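/- For α > 1, x > 0 and y ≥ 0, the partial derivative in x satisfies ∂/∂x g_α(x,y) = g_{α−1}(x,y) − g_α(x,y), where g_α(x,y) = e^{−x−y} Σ_{k≥0} x^{k+α−1} y^k/(Γ(k+α) k!). -/

import Mathlib

open Filter in
lemma sum_aux (α r : ℝ) (hα : 0 < α) (hr : 0 ≤ r) :
    Summable fun n : ℕ => r ^ n / (Real.Gamma ((n : ℝ) + α) * (Nat.factorial n)) := by
  apply summable_of_ratio_norm_eventually_le (r := 1/2) (by norm_num)
  filter_upwards [eventually_ge_atTop (max 1 ⌈2 * r⌉₊)] with n hn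
  have hn1 : (1 : ℝ) ≤ n := by exact_mod_cast le_trans (le_max_left _ _) hn
  have hn2 : 2 * r ≤ n := le_trans (Nat.le_ceil _) (by exact_mod_cast le_trans (le_max_right _ _) hn)
  have hz : (0:ℝ) < (n : ℝ) + α := by linarith
  have hΓ : 0 < Real.Gamma ((n : ℝ) + α) := Real.Gamma_pos_of_pos hz
  have hfac : (0:ℝ) < (Nat.factorial n : ℝ) := by positivity
  have key : Real.Gamma ((↑(n+1) : ℝ) + α) = ((n : ℝ) + α) * Real.Gamma ((n : ℝ) + α) := by
    rw [show ((↑(n+1) : ℝ) + α) = ((n:ℝ) + α) + 1 by push_cast; ring, Real.Gamma_add_one hz.ne']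
  have h1 : r / (((n:ℝ) + α) * ((n:ℝ) + 1)) ≤ 1/2 := by
    rw [div_le_iff₀ (by positivity)]
    nlinarith
  have e1 : r ^ (n+1) / (Real.Gamma ((↑(n+1) : ℝ) + α) * (Nat.factorial (n+1))) =
      (r / (((n:ℝ) + α) * ((n:ℝ) + 1))) * (r ^ n / (Real.Gamma ((n : ℝ) + α) * (Nat.factorial n))) := by
    rw [key, Nat.factorial_succ]
    push_cast
    field_simp
    ring
  rw [Real.norm_of_nonneg (by positivity), Real.norm_of_nonneg (by positivity), e1]
  exact mul_le_mul_of_nonneg_right h1 (by positivity)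

/-- The noncentral gamma-type kernel
`g_α(x,y) = e^{-x-y} ∑_{k≥0} x^{k+α-1} y^k / (Γ(k+α) k!)`. -/
noncomputable def royenG (α x y : ℝ) : ℝ :=
  Real.exp (-x - y) *
    ∑' k : ℕ, x ^ ((k : ℝ) + α - 1) * y ^ k / (Real.Gamma ((k : ℝ) + α) * (Nat.factorial k))

/-- For `α > 1`, `∂/∂x g_α(x,y) = g_{α-1}(x,y) - g_α(x,y)`. -/
theorem stmt_16 (α x y : ℝ) (hα : 1 < α) (hx : 0 < x) (hy : 0 ≤ y) :
    HasDerivAt (fun t => royenG α t y) (royenG (α - 1) x y - royenG α x y) x := by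
  set g : ℕ → ℝ → ℝ := fun n t =>
    t ^ ((n : ℝ) + α - 1) * y ^ n / (Real.Gamma ((n : ℝ) + α) * (Nat.factorial n)) with hg_def
  set g' : ℕ → ℝ → ℝ := fun n t =>
    t ^ ((n : ℝ) + (α - 1) - 1) * y ^ n / (Real.Gamma ((n : ℝ) + (α - 1)) * (Nat.factorial n))
    with hg'_def
  set C : ℝ := (x/2) ^ (α - 2) + (x+1) ^ (α - 2) with hC_def
  set u : ℕ → ℝ := fun n =>
    C * (((x+1) * y) ^ n / (Real.Gamma ((n : ℝ) + (α - 1)) * (Nat.factorial n))) with hu_def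
  have hα1 : (0:ℝ) < α - 1 := by linarith
  have hCpos : 0 < C := by positivity
  -- the open set
  set s : Set ℝ := Set.Ioo (x/2) (x+1) with hs_def
  have hxs : x ∈ s := ⟨by linarith, by linarith⟩
  -- summability of u
  have hu : Summable u := (sum_aux (α - 1) ((x+1)*y) hα1 (by positivity)).mul_left C
  -- termwise derivatives
  have hderiv : ∀ (n : ℕ) (t : ℝ), t ∈ s → HasDerivAt (g n) (g' n t) t := by
    intro n t ht
    have ht0 : 0 < t := lt_trans (by linarith) ht.1
    have hzn : (0:ℝ) < (n : ℝ) + α - 1 := by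
      have : (0:ℝ) ≤ (n:ℝ) := Nat.cast_nonneg n
      linarith
    have hΓ : Real.Gamma ((n : ℝ) + α) = ((n:ℝ) + α - 1) * Real.Gamma ((n : ℝ) + (α - 1)) := by
      rw [show ((n : ℝ) + α) = ((n:ℝ) + (α - 1)) + 1 by ring,
        Real.Gamma_add_one (by linarith : ((n:ℝ) + (α-1)) ≠ 0)]
      ring_nf
    have h1 := ((Real.hasDerivAt_rpow_const (x := t) (p := (n:ℝ) + α - 1)
      (Or.inl ht0.ne')).mul_const (y ^ n)).div_const
      (Real.Gamma ((n : ℝ) + α) * (Nat.factorial n))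
    convert h1 using 1
    · rfl
    · rfl
    have hΓ' : 0 < Real.Gamma ((n : ℝ) + (α - 1)) := Real.Gamma_pos_of_pos (by linarith)
    have hfac : (0:ℝ) < (Nat.factorial n : ℝ) := by positivity
    simp only [hg'_def]
    rw [hΓ, show (n:ℝ) + (α - 1) - 1 = (n:ℝ) + α - 1 - 1 by ring]
    field_simp
  -- the bound
  have hbound : ∀ (n : ℕ) (t : ℝ), t ∈ s → ‖g' n t‖ ≤ u n := by
    intro n t ht
    have ht0 : 0 < t := lt_trans (by linarith) ht.1
    have hΓ' : 0 < Real.Gamma ((n : ℝ) + (α - 1)) := Real.Gamma_pos_of_pos (by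
      have : (0:ℝ) ≤ (n:ℝ) := Nat.cast_nonneg n; linarith)
    have hfac : (0:ℝ) < (Nat.factorial n : ℝ) := by positivity
    have hrw : t ^ ((n : ℝ) + (α - 1) - 1) = t ^ (α - 2) * t ^ n := by
      rw [show (n : ℝ) + (α - 1) - 1 = (α - 2) + (n:ℝ) by ring, Real.rpow_add ht0,
        Real.rpow_natCast]
    have h2 : t ^ (α - 2) ≤ C := by
      rcases le_or_gt 0 (α - 2) with h | h
      · calc t ^ (α - 2) ≤ (x+1) ^ (α - 2) :=
              Real.rpow_le_rpow ht0.le ht.2.le h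
          _ ≤ C := by
              have : (0:ℝ) ≤ (x/2) ^ (α - 2) := by positivity
              simp only [hC_def]; linarith
      · calc t ^ (α - 2) ≤ (x/2) ^ (α - 2) :=
              Real.rpow_le_rpow_of_nonpos (by linarith) ht.1.le h.le
          _ ≤ C := by
              have : (0:ℝ) ≤ (x+1) ^ (α - 2) := by positivity
              simp only [hC_def]; linarith
    have h3 : t ^ n ≤ (x+1) ^ n := pow_le_pow_left₀ ht0.le ht.2.le n
    have hnorm : ‖g' n t‖ = g' n t := Real.norm_of_nonneg (by
      simp only [hg'_def]; positivity)
    rw [hnorm]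
    simp only [hg'_def, hu_def]
    rw [hrw, mul_pow, ← mul_div_assoc]
    apply div_le_div_of_nonneg_right ?_ (by positivity)
    calc t ^ (α - 2) * t ^ n * y ^ n ≤ C * (x+1) ^ n * y ^ n := by
          apply mul_le_mul_of_nonneg_right ?_ (by positivity)
          exact mul_le_mul h2 h3 (by positivity) hCpos.le
      _ = C * ((x+1) ^ n * y ^ n) := by ring
  -- summability at x
  have hg0 : Summable fun n => g n x := by
    have : (fun n : ℕ => g n x) = fun n : ℕ =>
        x ^ (α - 1) * ((x * y) ^ n / (Real.Gamma ((n : ℝ) + α) * (Nat.factorial n))) := by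
      funext n
      simp only [hg_def]
      rw [show (n : ℝ) + α - 1 = (α - 1) + (n:ℝ) by ring, Real.rpow_add hx,
        Real.rpow_natCast, mul_pow]
      ring
    rw [this]
    exact (sum_aux α (x * y) (by linarith) (by positivity)).mul_left _
  -- derivative of the series
  have hS : HasDerivAt (fun t => ∑' n, g n t) (∑' n, g' n x) x :=
    hasDerivAt_tsum_of_isPreconnected hu isOpen_Ioo (isPreconnected_Ioo)
      hderiv hbound hxs hg0 hxs
  have hE : HasDerivAt (fun t : ℝ => Real.exp (-t - y)) (Real.exp (-x - y) * (-1)) x :=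
    (((hasDerivAt_id x).neg.sub_const y).exp)
  have := hE.mul hS
  unfold royenG
  convert this using 1
  · rfl
  · rfl
  · rfl
  simp only [hg_def, hg'_def]
  ring
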